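/- Let b = (b_1, …, b_n) and c = (c_1, …, c_n) be real vectors with b_i ≥ c_i for all i, and let Y and Z be random vectors having the permutation distributions on b and on c, respectively. Then for any two disjoint proper subsets I, L of {1,…,n} and any x_I ∈ ℝ^{|I|} such that both conditioning events have positive probability, [Z_L | Z_I ≤ x_I] ≤_st [Y_L | Y_I ≤ x_I]. -/

import Mathlib

open scoped Classical
open Finset

noncomputable section

/-- Probability of the event `A` on a finite sample space with weights `w`. -/
def Pr {Ω : Type*} [Fintype Ω] (w : Ω → ℝ) (A : Ω → Prop) : ℝ :=
  ∑ ω : Ω, if A ω then w ω else 0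

/-- Expectation of `f` on a finite sample space with weights `w`. -/
def Expec {Ω : Type*} [Fintype Ω] (w : Ω → ℝ) (f : Ω → ℝ) : ℝ :=
  ∑ ω : Ω, w ω * f ω

/-- Conditional expectation of `f` given the event `A` under weights `w`. -/
def CExp {Ω : Type*} [Fintype Ω] (w : Ω → ℝ) (A : Ω → Prop) (f : Ω → ℝ) : ℝ :=
  (∑ ω : Ω, if A ω then w ω * f ω else 0) / Pr w A

/-- `[X_I | A] ≤_st [X_I | B]` : the conditional distribution of the subvector `X_I`
given the event `A` is dominated, in the usual stochastic order, by the conditional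
distribution of `X_I` given `B`; i.e. conditional expectations of every bounded
coordinatewise increasing function compare. -/
def CondSubvecStochLE {Ω : Type*} [Fintype Ω] {n : ℕ} (w : Ω → ℝ)
    (X : Ω → Fin n → ℝ) (I : Finset (Fin n)) (A B : Ω → Prop) : Prop :=
  ∀ φ : ({i : Fin n // i ∈ I} → ℝ) → ℝ, Monotone φ → (∃ C, ∀ v, |φ v| ≤ C) →
    CExp w A (fun ω => φ fun i => X ω i.1) ≤ CExp w B (fun ω => φ fun i => X ω i.1)

/-- Negative regression dependence: `[X_I | X_J = x_J] ≥_st [X_I | X_J = x_J*]`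
whenever `x_J ≤ x_J*` componentwise and both conditioning events have
positive probability. -/
def IsNRD {Ω : Type*} [Fintype Ω] {n : ℕ} (w : Ω → ℝ) (X : Ω → Fin n → ℝ) : Prop :=
  ∀ I J : Finset (Fin n), Disjoint I J → ∀ x y : Fin n → ℝ, (∀ j ∈ J, x j ≤ y j) →
    0 < Pr w (fun ω => ∀ j ∈ J, X ω j = x j) →
    0 < Pr w (fun ω => ∀ j ∈ J, X ω j = y j) →
    CondSubvecStochLE w X I (fun ω => ∀ j ∈ J, X ω j = y j)
      (fun ω => ∀ j ∈ J, X ω j = x j)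

/-- Negative left-tail dependence: `[X_I | X_J ≤ x_J] ≥_st [X_I | X_J ≤ x_J*]`
whenever `x_J ≤ x_J*` componentwise and both conditioning events have
positive probability. -/
def IsNLTD {Ω : Type*} [Fintype Ω] {n : ℕ} (w : Ω → ℝ) (X : Ω → Fin n → ℝ) : Prop :=
  ∀ I J : Finset (Fin n), Disjoint I J → ∀ x y : Fin n → ℝ, (∀ j ∈ J, x j ≤ y j) →
    0 < Pr w (fun ω => ∀ j ∈ J, X ω j ≤ x j) →
    0 < Pr w (fun ω => ∀ j ∈ J, X ω j ≤ y j) →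
    CondSubvecStochLE w X I (fun ω => ∀ j ∈ J, X ω j ≤ y j)
      (fun ω => ∀ j ∈ J, X ω j ≤ x j)

/-- Negative right-tail dependence: `[X_I | X_J > x_J] ≥_st [X_I | X_J > x_J*]`
whenever `x_J ≤ x_J*` componentwise and both conditioning events have
positive probability. -/
def IsNRTD {Ω : Type*} [Fintype Ω] {n : ℕ} (w : Ω → ℝ) (X : Ω → Fin n → ℝ) : Prop :=
  ∀ I J : Finset (Fin n), Disjoint I J → ∀ x y : Fin n → ℝ, (∀ j ∈ J, x j ≤ y j) →
    0 < Pr w (fun ω => ∀ j ∈ J, x j < X ω j) →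
    0 < Pr w (fun ω => ∀ j ∈ J, y j < X ω j) →
    CondSubvecStochLE w X I (fun ω => ∀ j ∈ J, y j < X ω j)
      (fun ω => ∀ j ∈ J, x j < X ω j)

/-- Negative association on a finite weighted sample space:
`Cov(ψ₁(X_{A₁}), ψ₂(X_{A₂})) ≤ 0` for disjoint `A₁, A₂` and bounded
coordinatewise increasing `ψ₁, ψ₂`. -/
def IsNAfin {Ω : Type*} [Fintype Ω] {n : ℕ} (w : Ω → ℝ) (X : Ω → Fin n → ℝ) : Prop :=
  ∀ A₁ A₂ : Finset (Fin n), Disjoint A₁ A₂ →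
    ∀ ψ₁ : ({i : Fin n // i ∈ A₁} → ℝ) → ℝ, ∀ ψ₂ : ({i : Fin n // i ∈ A₂} → ℝ) → ℝ,
      Monotone ψ₁ → Monotone ψ₂ → (∃ C, ∀ v, |ψ₁ v| ≤ C) → (∃ C, ∀ v, |ψ₂ v| ≤ C) →
      Expec w (fun ω => (ψ₁ fun i => X ω i.1) * (ψ₂ fun i => X ω i.1))
        ≤ Expec w (fun ω => ψ₁ fun i => X ω i.1) * Expec w (fun ω => ψ₂ fun i => X ω i.1)

/-- The uniform distribution on the permutations of `Fin n`. -/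
def unifPerm (n : ℕ) : Equiv.Perm (Fin n) → ℝ := fun _ => (Nat.factorial n : ℝ)⁻¹

/-- The random vector with the permutation distribution on `a`:
`X = (a_{σ(1)}, …, a_{σ(n)})` for a uniformly random permutation `σ`. -/
def permVec {n : ℕ} (a : Fin n → ℝ) (σ : Equiv.Perm (Fin n)) : Fin n → ℝ :=
  fun i => a (σ i)

namespace PermAux


open Equiv

variable {n : ℕ}

/-- The event that all constrained coordinates are below their (index) thresholds. -/
def Ev (n : ℕ) (I : Finset (Fin n)) (s : Fin n → ℕ) : Finset (Equiv.Perm (Fin n)) :=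
  univ.filter fun σ => ∀ i ∈ I, (σ i : ℕ) < s i

/-- Sum of `ψ` over a set of permutations. -/
def SS {n : ℕ} (A : Finset (Equiv.Perm (Fin n))) (ψ : (Fin n → Fin n) → ℝ) : ℝ :=
  ∑ σ ∈ A, ψ ⇑σ

/-- `ψ` depends only on the coordinates in `L`. -/
def DepOn {n : ℕ} (L : Finset (Fin n)) (ψ : (Fin n → Fin n) → ℝ) : Prop :=
  ∀ f g : Fin n → Fin n, (∀ i ∈ L, f i = g i) → ψ f = ψ g

lemma SS_nonneg {A : Finset (Equiv.Perm (Fin n))} {ψ : (Fin n → Fin n) → ℝ}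
    (h : ∀ f, 0 ≤ ψ f) : 0 ≤ SS A ψ :=
  Finset.sum_nonneg fun _ _ => h _

lemma Ev_mono {I : Finset (Fin n)} {s t : Fin n → ℕ} (h : ∀ i ∈ I, t i ≤ s i) :
    Ev n I t ⊆ Ev n I s := by
  intro σ hσ
  simp only [Ev, mem_filter, mem_univ, true_and] at *
  exact fun i hi => lt_of_lt_of_le (hσ i hi) (h i hi)

lemma Ev_congr {I : Finset (Fin n)} {s t : Fin n → ℕ} (h : ∀ i ∈ I, t i = s i) :
    Ev n I s = Ev n I t := by
  ext σ
  simp only [Ev, mem_filter, mem_univ, true_and]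
  exact ⟨fun hs i hi => (h i hi).symm ▸ hs i hi, fun ht i hi => (h i hi) ▸ ht i hi⟩

lemma trans_cross {xa xb xc na nb nc : ℝ} (hxb : 0 ≤ xb) (hna : 0 ≤ na) (hnb : 0 ≤ nb)
    (hnc : 0 ≤ nc) (hnbc : nb ≤ nc)
    (h1 : xc * nb ≤ xb * nc) (h2 : xa * nc ≤ xc * na) : xa * nb ≤ xb * na := by
  rcases eq_or_lt_of_le hnc with h | h
  · have hb0 : nb = 0 := le_antisymm (by linarith) hnb
    rw [hb0, mul_zero]
    exact mul_nonneg hxb hna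
  · have k1 := mul_le_mul_of_nonneg_right h2 hnb
    have k2 := mul_le_mul_of_nonneg_right h1 hna
    have e1 : xa * nc * nb = xa * nb * nc := by ring
    have e2 : xc * na * nb = xc * nb * na := by ring
    have e3 : xb * nc * na = xb * na * nc := by ring
    have k3 : xa * nb * nc ≤ xb * na * nc := by linarith
    exact le_of_mul_le_mul_right k3 h

lemma sum_cross {α : Type*} (V W : Finset α) (Sf Nf : α → ℝ)
    (h : ∀ v ∈ V, ∀ w ∈ W, Sf w * Nf v ≤ Sf v * Nf w) :
    (∑ w ∈ W, Sf w) * (∑ v ∈ V, Nf v) ≤ (∑ v ∈ V, Sf v) * (∑ w ∈ W, Nf w) := by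
  rw [Finset.sum_mul_sum, Finset.sum_mul_sum, Finset.sum_comm]
  exact Finset.sum_le_sum fun v hv => Finset.sum_le_sum fun w hw => h v hv w hw

lemma val_succAbove (p : Fin (n + 1)) (m : Fin n) :
    ((p.succAbove m : Fin (n + 1)) : ℕ) = if (m : ℕ) < (p : ℕ) then (m : ℕ) else (m : ℕ) + 1 := by
  have hc : (Fin.castSucc m < p) ↔ (m : ℕ) < (p : ℕ) := by
    rw [Fin.lt_def, Fin.coe_castSucc]
  rw [Fin.succAbove]
  by_cases h : (m : ℕ) < (p : ℕ)
  · rw [if_pos (hc.mpr h), if_pos h, Fin.coe_castSucc]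
  · rw [if_neg (fun hh => h (hc.mp hh)), if_neg h, Fin.val_succ]

lemma succAbove_anti {v w : Fin (n + 1)} (hvw : v ≤ w) (m : Fin n) :
    w.succAbove m ≤ v.succAbove m := by
  rw [Fin.le_def, val_succAbove, val_succAbove]
  rw [Fin.le_def] at hvw
  split_ifs <;> omega

/-- Transformed threshold after removing value `u`. -/
def tv (u a : ℕ) : ℕ := if a ≤ u then a else a - 1

lemma succAbove_lt_iff_tv (u : Fin (n + 1)) (m : Fin n) (a : ℕ) :
    ((u.succAbove m : Fin (n + 1)) : ℕ) < a ↔ (m : ℕ) < tv (u : ℕ) a := by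
  rw [val_succAbove, tv]
  split_ifs <;> omega

lemma tv_mono {u u' : ℕ} (h : u ≤ u') (a : ℕ) : tv u a ≤ tv u' a := by
  unfold tv; split_ifs <;> omega

/-- Extend a permutation of `Fin n` to a permutation of `Fin (n+1)` sending `p` to `v`. -/
def extp (p v : Fin (n + 1)) (τ : Equiv.Perm (Fin n)) : Equiv.Perm (Fin (n + 1)) :=
  ((finSuccEquiv' p).trans (Equiv.optionCongr τ)).trans (finSuccEquiv' v).symm

@[simp] lemma extp_apply_self (p v : Fin (n + 1)) (τ : Equiv.Perm (Fin n)) :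
    extp p v τ p = v := by
  simp [extp, finSuccEquiv'_at, finSuccEquiv'_symm_none]

@[simp] lemma extp_apply_succAbove (p v : Fin (n + 1)) (τ : Equiv.Perm (Fin n)) (j : Fin n) :
    extp p v τ (p.succAbove j) = v.succAbove (τ j) := by
  simp [extp, finSuccEquiv'_succAbove, finSuccEquiv'_symm_some]

lemma fse_some {v y : Fin (n + 1)} (h : y ≠ v) : ∃ j, finSuccEquiv' v y = some j := by
  obtain ⟨j, rfl⟩ := Fin.exists_succAbove_eq h
  exact ⟨j, finSuccEquiv'_succAbove v j⟩

/-- Inverse direction: restrict a permutation of `Fin (n+1)` with `σ p = v`. -/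
def unextp (p v : Fin (n + 1)) (σ : Equiv.Perm (Fin (n + 1))) : Equiv.Perm (Fin n) :=
  Equiv.removeNone (((finSuccEquiv' p).symm.trans σ).trans (finSuccEquiv' v))

lemma unextp_spec (p v : Fin (n + 1)) (σ : Equiv.Perm (Fin (n + 1))) (h : σ p = v) (j : Fin n) :
    v.succAbove (unextp p v σ j) = σ (p.succAbove j) := by
  have hne : σ (p.succAbove j) ≠ v := by
    rw [← h]
    exact fun hc => Fin.succAbove_ne p j (σ.injective hc)
  obtain ⟨u, hu⟩ := fse_some hne
  set e := ((finSuccEquiv' p).symm.trans σ).trans (finSuccEquiv' v) with he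
  have h1 : e (some j) = some u := by
    simp only [he, Equiv.trans_apply, finSuccEquiv'_symm_some]
    exact hu
  have h2 : some (unextp p v σ j) = e (some j) := Equiv.removeNone_some _ ⟨u, h1⟩
  rw [h1] at h2
  have h3 : unextp p v σ j = u := Option.some_injective _ h2
  have h4 := congrArg (finSuccEquiv' v).symm hu
  rw [Equiv.symm_apply_apply, finSuccEquiv'_symm_some] at h4
  rw [h3, ← h4]

lemma extp_unextp (p v : Fin (n + 1)) (σ : Equiv.Perm (Fin (n + 1))) (h : σ p = v) :
    extp p v (unextp p v σ) = σ := by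
  apply Equiv.ext
  intro i
  rcases eq_or_ne i p with rfl | hip
  · rw [extp_apply_self, h]
  · obtain ⟨j, rfl⟩ := Fin.exists_succAbove_eq hip
    rw [extp_apply_succAbove, unextp_spec p v σ h j]

lemma unextp_extp (p v : Fin (n + 1)) (τ : Equiv.Perm (Fin n)) :
    unextp p v (extp p v τ) = τ := by
  apply Equiv.ext
  intro j
  have h := unextp_spec p v (extp p v τ) (extp_apply_self p v τ) j
  rw [extp_apply_succAbove] at h
  exact Fin.succAbove_right_injective h

lemma sum_slice (p v : Fin (n + 1)) (Q : Equiv.Perm (Fin (n + 1)) → Prop)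
    (f : Equiv.Perm (Fin (n + 1)) → ℝ) :
    ∑ σ ∈ univ.filter (fun σ => σ p = v ∧ Q σ), f σ
      = ∑ τ ∈ univ.filter (fun τ => Q (extp p v τ)), f (extp p v τ) := by
  apply Finset.sum_nbij' (unextp p v) (extp p v)
  · intro σ hσ
    rw [mem_filter] at hσ ⊢
    refine ⟨mem_univ _, ?_⟩
    rw [extp_unextp p v σ hσ.2.1]
    exact hσ.2.2
  · intro τ hτ
    rw [mem_filter] at hτ ⊢
    exact ⟨mem_univ _, extp_apply_self p v τ, hτ.2⟩
  · intro σ hσ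
    rw [mem_filter] at hσ
    exact extp_unextp p v σ hσ.2.1
  · intro τ _
    exact unextp_extp p v τ
  · intro σ hσ
    rw [mem_filter] at hσ
    rw [extp_unextp p v σ hσ.2.1]

/-- Function-level extension. -/
def extv (p v : Fin (n + 1)) (f : Fin n → Fin n) : Fin (n + 1) → Fin (n + 1) :=
  fun i => (finSuccEquiv' p i).elim v fun j => v.succAbove (f j)

lemma extv_coe (p v : Fin (n + 1)) (τ : Equiv.Perm (Fin n)) :
    extv p v ⇑τ = ⇑(extp p v τ) := by
  funext i
  rcases eq_or_ne i p with rfl | hip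
  · simp [extv, finSuccEquiv'_at]
  · obtain ⟨j, rfl⟩ := Fin.exists_succAbove_eq hip
    simp [extv, finSuccEquiv'_succAbove]

lemma extv_mono (p v : Fin (n + 1)) : Monotone (extv p v) := by
  intro f g hfg i
  unfold extv
  cases hfe : finSuccEquiv' p i with
  | none => simp
  | some j => simpa using (Fin.strictMono_succAbove v).monotone (hfg j)

lemma extv_apply_succAbove (p v : Fin (n + 1)) (f : Fin n → Fin n) (j : Fin n) :
    extv p v f (p.succAbove j) = v.succAbove (f j) := by
  simp [extv, finSuccEquiv'_succAbove]

/-- Off-`p` constraints. -/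
def Qc (n : ℕ) (p : Fin (n + 1)) (I : Finset (Fin (n + 1))) (s : Fin (n + 1) → ℕ)
    (σ : Equiv.Perm (Fin (n + 1))) : Prop :=
  ∀ i ∈ I.erase p, (σ i : ℕ) < s i

/-- Slice of the event where the value at position `p` is exactly `v`. -/
def Slc (n : ℕ) (p v : Fin (n + 1)) (I : Finset (Fin (n + 1))) (s : Fin (n + 1) → ℕ) :
    Finset (Equiv.Perm (Fin (n + 1))) :=
  univ.filter (fun σ => σ p = v ∧ Qc n p I s σ)

/-- Transported constrained-index set. -/
def Jc (n : ℕ) (p : Fin (n + 1)) (I : Finset (Fin (n + 1))) : Finset (Fin n) :=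
  univ.filter (fun j => p.succAbove j ∈ I.erase p)

/-- Transported thresholds. -/
def s'c (n : ℕ) (p v : Fin (n + 1)) (s : Fin (n + 1) → ℕ) : Fin n → ℕ :=
  fun j => tv (v : ℕ) (s (p.succAbove j))

lemma Qc_iff (n : ℕ) (p v : Fin (n + 1)) (I : Finset (Fin (n + 1))) (s : Fin (n + 1) → ℕ)
    (τ : Equiv.Perm (Fin n)) :
    Qc n p I s (extp p v τ) ↔ ∀ j ∈ Jc n p I, (τ j : ℕ) < s'c n p v s j := by
  constructor
  · intro h j hj
    simp only [Jc, mem_filter, mem_univ, true_and] at hj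
    have h2 := h _ hj
    rw [extp_apply_succAbove] at h2
    exact (succAbove_lt_iff_tv v (τ j) _).mp h2
  · intro h i hi
    have hip : i ≠ p := (Finset.mem_erase.mp hi).1
    obtain ⟨j, rfl⟩ := Fin.exists_succAbove_eq hip
    rw [extp_apply_succAbove, succAbove_lt_iff_tv]
    refine h j ?_
    simp only [Jc, mem_filter, mem_univ, true_and]
    exact hi

lemma slc_reindex (n : ℕ) (p v : Fin (n + 1)) (I : Finset (Fin (n + 1)))
    (s : Fin (n + 1) → ℕ) (f : Equiv.Perm (Fin (n + 1)) → ℝ) :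
    ∑ σ ∈ Slc n p v I s, f σ
      = ∑ τ ∈ Ev n (Jc n p I) (s'c n p v s), f (extp p v τ) := by
  rw [Slc, sum_slice p v (Qc n p I s) f]
  congr 1
  ext τ
  simp only [Ev, mem_filter, mem_univ, true_and]
  exact Qc_iff n p v I s τ

lemma slc_SS (n : ℕ) (p v : Fin (n + 1)) (I : Finset (Fin (n + 1))) (s : Fin (n + 1) → ℕ)
    (ψ : (Fin (n + 1) → Fin (n + 1)) → ℝ) :
    SS (Slc n p v I s) ψ = SS (Ev n (Jc n p I) (s'c n p v s)) (fun f => ψ (extv p v f)) := by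
  rw [SS, slc_reindex n p v I s (fun σ => ψ ⇑σ)]
  refine Finset.sum_congr rfl fun τ _ => ?_
  show ψ ⇑(extp p v τ) = ψ (extv p v ⇑τ)
  rw [extv_coe]

lemma slc_card (n : ℕ) (p v : Fin (n + 1)) (I : Finset (Fin (n + 1))) (s : Fin (n + 1) → ℕ) :
    ((Slc n p v I s).card : ℝ) = ((Ev n (Jc n p I) (s'c n p v s)).card : ℝ) := by
  have h1 := slc_reindex n p v I s (fun _ => (1 : ℝ))
  simpa [Finset.sum_const, nsmul_eq_mul] using h1

lemma core1 (n : ℕ)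
    (IH : ∀ (I L : Finset (Fin n)), Disjoint I L →
      ∀ s t : Fin n → ℕ, (∀ i ∈ I, t i ≤ s i) →
      ∀ ψ : (Fin n → Fin n) → ℝ, Monotone ψ → (∀ f, 0 ≤ ψ f) → DepOn L ψ →
      SS (Ev n I s) ψ * ((Ev n I t).card : ℝ) ≤ SS (Ev n I t) ψ * ((Ev n I s).card : ℝ))
    (I L : Finset (Fin (n + 1))) (hIL : Disjoint I L) (p : Fin (n + 1)) (hp : p ∈ I)
    (s t : Fin (n + 1) → ℕ) (hstp : t p ≤ s p) (hoff : ∀ i ∈ I, i ≠ p → t i = s i)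
    (ψ : (Fin (n + 1) → Fin (n + 1)) → ℝ) (hmono : Monotone ψ) (hpos : ∀ f, 0 ≤ ψ f)
    (hdep : DepOn L ψ) :
    SS (Ev (n + 1) I s) ψ * ((Ev (n + 1) I t).card : ℝ)
      ≤ SS (Ev (n + 1) I t) ψ * ((Ev (n + 1) I s).card : ℝ) := by
  have hpL : p ∉ L := fun hpl => (Finset.disjoint_left.mp hIL hp) hpl
  have hEv : ∀ (a : ℕ) (u : Fin (n + 1) → ℕ), (∀ i ∈ I.erase p, u i = s i) → u p = a →
      Ev (n + 1) I u = univ.filter (fun σ => ((σ p : ℕ) < a) ∧ Qc n p I s σ) := by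
    intro a u hus hup
    ext σ
    simp only [Ev, mem_filter, mem_univ, true_and]; simp only [Qc]
    constructor
    · intro h
      constructor
      · rw [← hup]; exact h p hp
      · intro i hi
        rw [← hus i hi]
        exact h i (Finset.mem_of_mem_erase hi)
    · rintro ⟨h1, h2⟩ i hi
      rcases eq_or_ne i p with rfl | hip
      · rw [hup]; exact h1
      · rw [hus i (Finset.mem_erase.mpr ⟨hip, hi⟩)]
        exact h2 i (Finset.mem_erase.mpr ⟨hip, hi⟩)
  have hslice_disj : ∀ v w : Fin (n + 1), v ≠ w → Disjoint (Slc n p v I s) (Slc n p w I s) := by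
    intro v w hvw
    refine Finset.disjoint_left.mpr fun σ h1 h2 => hvw ?_
    simp only [Slc, mem_filter] at h1 h2
    rw [← h1.2.1, h2.2.1]
  have hdecomp : ∀ a : ℕ, univ.filter (fun σ => ((σ p : ℕ) < a) ∧ Qc n p I s σ)
      = (univ.filter fun v : Fin (n + 1) => (v : ℕ) < a).biUnion (fun v => Slc n p v I s) := by
    intro a
    ext σ
    simp only [Slc, mem_filter, mem_univ, true_and, mem_biUnion]
    constructor
    · rintro ⟨h1, h2⟩
      exact ⟨σ p, h1, rfl, h2⟩
    · rintro ⟨v, hv, hvp, h2⟩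
      refine ⟨?_, h2⟩
      rw [hvp]
      exact hv
  have key : ∀ a : ℕ, SS (univ.filter (fun σ => ((σ p : ℕ) < a) ∧ Qc n p I s σ)) ψ
      = ∑ v ∈ univ.filter (fun v : Fin (n + 1) => (v : ℕ) < a), SS (Slc n p v I s) ψ := by
    intro a
    rw [SS, hdecomp a]
    exact Finset.sum_biUnion (fun v _ w _ hvw => hslice_disj v w hvw)
  have keyN : ∀ a : ℕ,
      (((univ.filter (fun σ => ((σ p : ℕ) < a) ∧ Qc n p I s σ)).card : ℕ) : ℝ)
      = ∑ v ∈ univ.filter (fun v : Fin (n + 1) => (v : ℕ) < a), ((Slc n p v I s).card : ℝ) := by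
    intro a
    rw [hdecomp a, Finset.card_biUnion (fun v _ w _ hvw => hslice_disj v w hvw)]
    push_cast
    rfl
  -- the slice comparison
  have hslice : ∀ v w : Fin (n + 1), v ≤ w →
      SS (Slc n p w I s) ψ * ((Slc n p v I s).card : ℝ)
        ≤ SS (Slc n p v I s) ψ * ((Slc n p w I s).card : ℝ) := by
    intro v w hvw
    have hJL' : Disjoint (Jc n p I) (univ.filter (fun j : Fin n => p.succAbove j ∈ L)) := by
      rw [Finset.disjoint_left]
      intro j hj hj'
      simp only [Jc, mem_filter, mem_univ, true_and] at hj hj'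
      exact Finset.disjoint_left.mp hIL (Finset.mem_of_mem_erase hj) hj'
    have hψle : ∀ f, ψ (extv p w f) ≤ ψ (extv p v f) := by
      intro f
      have heq : ψ (extv p w f)
          = ψ (fun i => if i ∈ L then extv p w f i else extv p v f i) :=
        hdep _ _ (fun i hi => by simp [hi])
      rw [heq]
      apply hmono
      intro i
      by_cases hiL : i ∈ L
      · simp only [hiL, if_pos]
        have hip : i ≠ p := fun h => hpL (h ▸ hiL)
        obtain ⟨j, rfl⟩ := Fin.exists_succAbove_eq hip
        rw [extv_apply_succAbove, extv_apply_succAbove]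
        exact succAbove_anti hvw (f j)
      · simp [hiL]
    have hψ'mono : Monotone (fun f => ψ (extv p v f)) := fun f g h => hmono (extv_mono p v h)
    have hψ'pos : ∀ f, 0 ≤ ψ (extv p v f) := fun f => hpos _
    have hψ'dep : DepOn (univ.filter (fun j : Fin n => p.succAbove j ∈ L))
        (fun f => ψ (extv p v f)) := by
      intro f g hfg
      apply hdep
      intro i hi
      have hip : i ≠ p := fun h => hpL (h ▸ hi)
      obtain ⟨j, rfl⟩ := Fin.exists_succAbove_eq hip
      rw [extv_apply_succAbove, extv_apply_succAbove,
        hfg j (by simp only [mem_filter, mem_univ, true_and]; exact hi)]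
    have hs'le : ∀ j ∈ Jc n p I, s'c n p v s j ≤ s'c n p w s j :=
      fun j _ => tv_mono (Fin.le_def.mp hvw) _
    have step2 := IH (Jc n p I) (univ.filter (fun j : Fin n => p.succAbove j ∈ L)) hJL'
      (s'c n p w s) (s'c n p v s) hs'le (fun f => ψ (extv p v f)) hψ'mono hψ'pos hψ'dep
    have step1 : SS (Ev n (Jc n p I) (s'c n p w s)) (fun f => ψ (extv p w f))
        ≤ SS (Ev n (Jc n p I) (s'c n p w s)) (fun f => ψ (extv p v f)) :=
      Finset.sum_le_sum fun τ _ => hψle _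
    rw [slc_SS n p v I s ψ, slc_SS n p w I s ψ, slc_card n p v I s, slc_card n p w I s]
    calc SS (Ev n (Jc n p I) (s'c n p w s)) (fun f => ψ (extv p w f))
          * ((Ev n (Jc n p I) (s'c n p v s)).card : ℝ)
        ≤ SS (Ev n (Jc n p I) (s'c n p w s)) (fun f => ψ (extv p v f))
          * ((Ev n (Jc n p I) (s'c n p v s)).card : ℝ) :=
          mul_le_mul_of_nonneg_right step1 (Nat.cast_nonneg _)
      _ ≤ SS (Ev n (Jc n p I) (s'c n p v s)) (fun f => ψ (extv p v f))
          * ((Ev n (Jc n p I) (s'c n p w s)).card : ℝ) := step2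
  -- assemble
  have hVsplit : univ.filter (fun v : Fin (n + 1) => (v : ℕ) < s p)
      = univ.filter (fun v : Fin (n + 1) => (v : ℕ) < t p)
        ∪ univ.filter (fun v : Fin (n + 1) => t p ≤ (v : ℕ) ∧ (v : ℕ) < s p) := by
    ext v
    simp only [mem_filter, mem_univ, true_and, mem_union]
    omega
  have hVdisj : Disjoint (univ.filter (fun v : Fin (n + 1) => (v : ℕ) < t p))
      (univ.filter (fun v : Fin (n + 1) => t p ≤ (v : ℕ) ∧ (v : ℕ) < s p)) := by
    rw [Finset.disjoint_left]
    intro v h1 h2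
    simp only [mem_filter, mem_univ, true_and] at h1 h2
    omega
  have hEvs := hEv (s p) s (fun i _ => rfl) rfl
  have hEvt := hEv (t p) t
    (fun i hi => hoff i (Finset.mem_of_mem_erase hi) (Finset.mem_erase.mp hi).1) rfl
  rw [hEvs, hEvt, key (s p), key (t p), keyN (s p), keyN (t p), hVsplit,
    Finset.sum_union hVdisj, Finset.sum_union hVdisj]
  have hcross := sum_cross (univ.filter (fun v : Fin (n + 1) => (v : ℕ) < t p))
    (univ.filter (fun v : Fin (n + 1) => t p ≤ (v : ℕ) ∧ (v : ℕ) < s p))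
    (fun v => SS (Slc n p v I s) ψ) (fun v => ((Slc n p v I s).card : ℝ))
    (fun v hv w hw => by
      refine hslice v w ?_
      simp only [mem_filter, mem_univ, true_and] at hv hw
      rw [Fin.le_def]
      omega)
  nlinarith [hcross]

theorem core : ∀ (n : ℕ) (I L : Finset (Fin n)), Disjoint I L →
    ∀ s t : Fin n → ℕ, (∀ i ∈ I, t i ≤ s i) →
    ∀ ψ : (Fin n → Fin n) → ℝ, Monotone ψ → (∀ f, 0 ≤ ψ f) → DepOn L ψ →
    SS (Ev n I s) ψ * ((Ev n I t).card : ℝ) ≤ SS (Ev n I t) ψ * ((Ev n I s).card : ℝ) := by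
  intro n
  induction n with
  | zero =>
    intro I L _ s t _ ψ _ _ _
    have h : Ev 0 I s = Ev 0 I t := Ev_congr (fun i _ => i.elim0)
    rw [h]
  | succ n IH =>
    intro I L hIL s t hst ψ hm hp hd
    suffices H : ∀ m (s t : Fin (n + 1) → ℕ), (∀ i ∈ I, t i ≤ s i) →
        ((I.filter fun i => t i ≠ s i).card ≤ m) →
        SS (Ev (n + 1) I s) ψ * ((Ev (n + 1) I t).card : ℝ)
          ≤ SS (Ev (n + 1) I t) ψ * ((Ev (n + 1) I s).card : ℝ) by
      exact H _ s t hst le_rfl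
    intro m
    induction m with
    | zero =>
      intro s t hst h0
      have hfe : (I.filter fun i => t i ≠ s i) = ∅ := Finset.card_eq_zero.mp (Nat.le_zero.mp h0)
      have heq : ∀ i ∈ I, t i = s i := by
        intro i hi
        by_contra hne
        have : i ∈ I.filter fun i => t i ≠ s i := Finset.mem_filter.mpr ⟨hi, hne⟩
        rw [hfe] at this
        exact absurd this (Finset.notMem_empty i)
      rw [Ev_congr heq]
    | succ m ihm =>
      intro s t hst hcard
      rcases Finset.eq_empty_or_nonempty (I.filter fun i => t i ≠ s i) with hfe | ⟨p, hpmem⟩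
      · have heq : ∀ i ∈ I, t i = s i := by
          intro i hi
          by_contra hne
          have : i ∈ I.filter fun i => t i ≠ s i := Finset.mem_filter.mpr ⟨hi, hne⟩
          rw [hfe] at this
          exact absurd this (Finset.notMem_empty i)
        rw [Ev_congr heq]
      · have hpI : p ∈ I := (Finset.mem_filter.mp hpmem).1
        have h1 := core1 n IH I L hIL p hpI s (Function.update s p (t p))
          (by rw [Function.update_self]; exact hst p hpI)
          (fun i _ hip => Function.update_of_ne hip _ _)
          ψ hm hp hd
        have hmid_le : ∀ i ∈ I, t i ≤ Function.update s p (t p) i := by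
          intro i hi
          rcases eq_or_ne i p with rfl | hip
          · rw [Function.update_self]
          · rw [Function.update_of_ne hip]
            exact hst i hi
        have hsub : (I.filter fun i => t i ≠ Function.update s p (t p) i)
            ⊆ (I.filter fun i => t i ≠ s i).erase p := by
          intro i hi
          rw [Finset.mem_filter] at hi
          have hip : i ≠ p := by
            rintro rfl
            exact hi.2 (Function.update_self i (t i) s).symm
          rw [Function.update_of_ne hip] at hi
          exact Finset.mem_erase.mpr ⟨hip, Finset.mem_filter.mpr ⟨hi.1, hi.2⟩⟩
        have hcard' : (I.filter fun i => t i ≠ Function.update s p (t p) i).card ≤ m := by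
          have h2 := Finset.card_le_card hsub
          rw [Finset.card_erase_of_mem hpmem] at h2
          omega
        have h2 := ihm (Function.update s p (t p)) t hmid_le hcard'
        have hEsub : Ev (n + 1) I t ⊆ Ev (n + 1) I (Function.update s p (t p)) :=
          Ev_mono hmid_le
        have hxbc : SS (Ev (n + 1) I t) ψ ≤ SS (Ev (n + 1) I (Function.update s p (t p))) ψ :=
          Finset.sum_le_sum_of_subset_of_nonneg hEsub (fun σ _ _ => hp _)
        exact trans_cross (SS_nonneg hp) (Nat.cast_nonneg _) (Nat.cast_nonneg _)
          (Nat.cast_nonneg _) (Nat.cast_le.mpr (Finset.card_le_card hEsub)) h2 h1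

/-! Glue lemmas -/

lemma perm_sum_reindex {n : ℕ} (a : Fin n → ℝ) (π : Equiv.Perm (Fin n))
    (G : (Fin n → ℝ) → ℝ) :
    ∑ σ : Equiv.Perm (Fin n), G (fun i => a (σ i))
      = ∑ σ : Equiv.Perm (Fin n), G (fun i => a (π (σ i))) :=
  Fintype.sum_equiv (Equiv.mulLeft π⁻¹) _ _ (fun σ => by
    congr 1
    funext i
    simp [Equiv.Perm.mul_apply])

lemma Pr_sorted {n : ℕ} (a : Fin n → ℝ) (π : Equiv.Perm (Fin n)) (P : (Fin n → ℝ) → Prop) :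
    Pr (unifPerm n) (fun σ => P (permVec a σ))
      = Pr (unifPerm n) (fun σ => P (permVec (fun i => a (π i)) σ)) := by
  unfold Pr
  exact perm_sum_reindex a π (fun h => if P h then (Nat.factorial n : ℝ)⁻¹ else 0)

lemma CExp_num_sorted {n : ℕ} (a : Fin n → ℝ) (π : Equiv.Perm (Fin n))
    (P : (Fin n → ℝ) → Prop) (F : (Fin n → ℝ) → ℝ) :
    (∑ σ : Equiv.Perm (Fin n),
        if P (permVec a σ) then unifPerm n σ * F (permVec a σ) else 0)
      = ∑ σ : Equiv.Perm (Fin n),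
        if P (permVec (fun i => a (π i)) σ) then
          unifPerm n σ * F (permVec (fun i => a (π i)) σ) else 0 :=
  perm_sum_reindex a π (fun h => if P h then (Nat.factorial n : ℝ)⁻¹ * F h else 0)

lemma CExp_sorted {n : ℕ} (a : Fin n → ℝ) (π : Equiv.Perm (Fin n))
    (P : (Fin n → ℝ) → Prop) (F : (Fin n → ℝ) → ℝ) :
    CExp (unifPerm n) (fun σ => P (permVec a σ)) (fun σ => F (permVec a σ))
      = CExp (unifPerm n) (fun σ => P (permVec (fun i => a (π i)) σ))
          (fun σ => F (permVec (fun i => a (π i)) σ)) := by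
  unfold CExp
  rw [CExp_num_sorted a π P F, Pr_sorted a π P]

/-- Classical filter on a fintype. -/
def cfilter {α : Type*} [Fintype α] (p : α → Prop) : Finset α :=
  @Finset.filter α p (fun a => Classical.propDecidable (p a)) univ

lemma mem_cfilter {α : Type*} [Fintype α] (p : α → Prop) (a : α) :
    a ∈ cfilter p ↔ p a := by
  rw [cfilter, Finset.mem_filter]
  simp

lemma Pr_count {n : ℕ} (A : Equiv.Perm (Fin n) → Prop) :
    Pr (unifPerm n) A
      = (Nat.factorial n : ℝ)⁻¹ * ((cfilter A).card : ℝ) := by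
  unfold Pr unifPerm cfilter
  rw [← Finset.sum_filter, Finset.sum_const, nsmul_eq_mul, mul_comm]

lemma CExp_count {n : ℕ} (A : Equiv.Perm (Fin n) → Prop) (f : Equiv.Perm (Fin n) → ℝ) :
    CExp (unifPerm n) A f
      = (∑ σ ∈ cfilter A, f σ) / ((cfilter A).card : ℝ) := by
  unfold CExp
  rw [Pr_count]
  have hnum : (∑ ω : Equiv.Perm (Fin n), if A ω then unifPerm n ω * f ω else 0)
      = (Nat.factorial n : ℝ)⁻¹ * ∑ σ ∈ cfilter A, f σ := by
    unfold cfilter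
    rw [Finset.mul_sum, ← Finset.sum_filter]
    rfl
  rw [hnum, mul_div_mul_left _ _ (inv_ne_zero (by exact_mod_cast (Nat.factorial_ne_zero n)))]

lemma monotone_le_iff_lt_card {n : ℕ} {g : Fin n → ℝ} (hg : Monotone g) (v : ℝ) (u : Fin n) :
    g u ≤ v ↔ (u : ℕ) < (univ.filter fun j => g j ≤ v).card := by
  constructor
  · intro h
    have hsub : Finset.Iic u ⊆ univ.filter fun j => g j ≤ v := fun j hj =>
      mem_filter.mpr ⟨mem_univ _, le_trans (hg (Finset.mem_Iic.mp hj)) h⟩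
    have hc := Finset.card_le_card hsub
    rw [Fin.card_Iic] at hc
    omega
  · intro h
    by_contra hgu
    have hsub : (univ.filter fun j => g j ≤ v) ⊆ Finset.Iio u := by
      intro j hj
      rw [mem_filter] at hj
      rw [Finset.mem_Iio]
      by_contra hju
      exact hgu (le_trans (hg (not_lt.mp hju)) hj.2)
    have hc := Finset.card_le_card hsub
    rw [Fin.card_Iio] at hc
    omega

lemma card_filter_perm {n : ℕ} (π : Equiv.Perm (Fin n)) (P : Fin n → Prop) :
    (univ.filter fun j => P (π j)).card = (univ.filter P).card := by
  apply Finset.card_bij (fun j _ => π j)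
  · intro j hj
    rw [mem_filter] at hj ⊢
    exact ⟨mem_univ _, hj.2⟩
  · intro j1 h1 j2 h2 he
    exact π.injective he
  · intro b hb
    rw [mem_filter] at hb
    refine ⟨π⁻¹ b, ?_, ?_⟩
    · rw [mem_filter]
      refine ⟨mem_univ _, ?_⟩
      rw [← Equiv.Perm.mul_apply, mul_inv_cancel, Equiv.Perm.one_apply]
      exact hb.2
    · rw [← Equiv.Perm.mul_apply, mul_inv_cancel, Equiv.Perm.one_apply]

lemma sorted_le {n : ℕ} {b c : Fin n → ℝ} (hbc : ∀ i, c i ≤ b i) (u : Fin n) :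
    (c ∘ ⇑(Tuple.sort c)) u ≤ (b ∘ ⇑(Tuple.sort b)) u := by
  have hf : Monotone (b ∘ ⇑(Tuple.sort b)) := Tuple.monotone_sort b
  have hg : Monotone (c ∘ ⇑(Tuple.sort c)) := Tuple.monotone_sort c
  set v := (b ∘ ⇑(Tuple.sort b)) u with hv
  have h1 : (u : ℕ) < (univ.filter fun j => (b ∘ ⇑(Tuple.sort b)) j ≤ v).card :=
    (monotone_le_iff_lt_card hf v u).mp le_rfl
  have h2 : (univ.filter fun j => (b ∘ ⇑(Tuple.sort b)) j ≤ v).card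
      = (univ.filter fun j => b j ≤ v).card :=
    card_filter_perm (Tuple.sort b) (fun j => b j ≤ v)
  have h3 : (univ.filter fun j => b j ≤ v).card ≤ (univ.filter fun j => c j ≤ v).card := by
    apply Finset.card_le_card
    intro j hj
    rw [mem_filter] at hj ⊢
    exact ⟨mem_univ _, le_trans (hbc j) hj.2⟩
  have h4 : (univ.filter fun j => c j ≤ v).card
      = (univ.filter fun j => (c ∘ ⇑(Tuple.sort c)) j ≤ v).card :=
    (card_filter_perm (Tuple.sort c) (fun j => c j ≤ v)).symm
  exact (monotone_le_iff_lt_card hg v u).mpr (by omega)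

end PermAux

open PermAux

/-- If `Y`, `Z` have the permutation distributions on `b ≥ c`
(componentwise), then `[Z_L | Z_I ≤ x_I] ≤_st [Y_L | Y_I ≤ x_I]` for disjoint proper
subsets `I, L` whenever both conditioning events have positive probability. -/
theorem permutation_left_tail_comparison (n : ℕ) (b c : Fin n → ℝ)
    (hbc : ∀ i, c i ≤ b i) (I L : Finset (Fin n)) (hIL : Disjoint I L)
    (hI : I ≠ Finset.univ) (hL : L ≠ Finset.univ) (x : Fin n → ℝ)
    (hposY : 0 < Pr (unifPerm n) fun σ => ∀ i ∈ I, permVec b σ i ≤ x i)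
    (hposZ : 0 < Pr (unifPerm n) fun σ => ∀ i ∈ I, permVec c σ i ≤ x i) :
    ∀ φ : ({i : Fin n // i ∈ L} → ℝ) → ℝ, Monotone φ → (∃ C, ∀ v, |φ v| ≤ C) →
      CExp (unifPerm n) (fun σ => ∀ i ∈ I, permVec c σ i ≤ x i)
          (fun σ => φ fun i => permVec c σ i.1)
        ≤ CExp (unifPerm n) (fun σ => ∀ i ∈ I, permVec b σ i ≤ x i)
          (fun σ => φ fun i => permVec b σ i.1) := by
  intro φ hφ hbd
  obtain ⟨C, hC⟩ := hbd
  have hfacpos : (0 : ℝ) < ((Nat.factorial n : ℝ))⁻¹ := by positivity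
  -- sorted vectors
  have hscm : Monotone (fun i => c (Tuple.sort c i)) := Tuple.monotone_sort c
  have hsbm : Monotone (fun i => b (Tuple.sort b i)) := Tuple.monotone_sort b
  have hdom : ∀ i, c (Tuple.sort c i) ≤ b (Tuple.sort b i) := fun i => sorted_le hbc i
  -- rewrite the two CExp's using sorted vectors
  refine le_trans (le_of_eq (CExp_sorted c (Tuple.sort c)
    (fun h => ∀ i ∈ I, h i ≤ x i) (fun h => φ fun i => h i.1))) ?_
  refine le_trans ?_ (le_of_eq (CExp_sorted b (Tuple.sort b)
    (fun h => ∀ i ∈ I, h i ≤ x i) (fun h => φ fun i => h i.1)).symm)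
  -- counting form
  rw [CExp_count, CExp_count]
  -- identify filters with threshold events
  have hfc : cfilter (fun σ : Equiv.Perm (Fin n) =>
        ∀ i ∈ I, permVec (fun i => c (Tuple.sort c i)) σ i ≤ x i)
      = Ev n I (fun i => (univ.filter fun j => c (Tuple.sort c j) ≤ x i).card) := by
    ext σ
    rw [mem_cfilter]
    simp only [Ev, mem_filter, mem_univ, true_and, permVec]
    constructor <;> intro h i hi
    · exact (monotone_le_iff_lt_card hscm (x i) (σ i)).mp (h i hi)
    · exact (monotone_le_iff_lt_card hscm (x i) (σ i)).mpr (h i hi)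
  have hfb : cfilter (fun σ : Equiv.Perm (Fin n) =>
        ∀ i ∈ I, permVec (fun i => b (Tuple.sort b i)) σ i ≤ x i)
      = Ev n I (fun i => (univ.filter fun j => b (Tuple.sort b j) ≤ x i).card) := by
    ext σ
    rw [mem_cfilter]
    simp only [Ev, mem_filter, mem_univ, true_and, permVec]
    constructor <;> intro h i hi
    · exact (monotone_le_iff_lt_card hsbm (x i) (σ i)).mp (h i hi)
    · exact (monotone_le_iff_lt_card hsbm (x i) (σ i)).mpr (h i hi)
  rw [hfc, hfb]
  -- positivity of both event cardinalities
  rw [Pr_sorted c (Tuple.sort c) (fun h => ∀ i ∈ I, h i ≤ x i), Pr_count, hfc] at hposZ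
  rw [Pr_sorted b (Tuple.sort b) (fun h => ∀ i ∈ I, h i ≤ x i), Pr_count, hfb] at hposY
  have hNc : (0 : ℝ) <
      ((Ev n I (fun i => (univ.filter fun j => c (Tuple.sort c j) ≤ x i).card)).card : ℝ) := by
    rcases mul_pos_iff.mp hposZ with ⟨-, h⟩ | ⟨h1, -⟩
    · exact h
    · exact absurd h1 (asymm hfacpos)
  have hNb : (0 : ℝ) <
      ((Ev n I (fun i => (univ.filter fun j => b (Tuple.sort b j) ≤ x i).card)).card : ℝ) := by
    rcases mul_pos_iff.mp hposY with ⟨-, h⟩ | ⟨h1, -⟩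
    · exact h
    · exact absurd h1 (asymm hfacpos)
  rw [div_le_div_iff₀ hNc hNb]
  -- threshold comparison
  have hk : ∀ i ∈ I, (univ.filter fun j => b (Tuple.sort b j) ≤ x i).card
      ≤ (univ.filter fun j => c (Tuple.sort c j) ≤ x i).card := by
    intro i _
    rw [card_filter_perm (Tuple.sort b) (fun j => b j ≤ x i),
      card_filter_perm (Tuple.sort c) (fun j => c j ≤ x i)]
    apply Finset.card_le_card
    intro j hj
    rw [mem_filter] at hj ⊢
    exact ⟨mem_univ _, le_trans (hbc j) hj.2⟩
  -- shifted test functions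
  have hψbmono : Monotone (fun f : Fin n → Fin n =>
      φ (fun i : {i : Fin n // i ∈ L} => b (Tuple.sort b (f i.1))) + C) := by
    intro f g hfg
    exact add_le_add_left (hφ (fun i => hsbm (hfg i.1))) C
  have hψbpos : ∀ f : Fin n → Fin n,
      0 ≤ φ (fun i : {i : Fin n // i ∈ L} => b (Tuple.sort b (f i.1))) + C := by
    intro f
    have := (abs_le.mp (hC (fun i => b (Tuple.sort b (f i.1))))).1
    linarith
  have hψbdep : DepOn L (fun f : Fin n → Fin n =>
      φ (fun i : {i : Fin n // i ∈ L} => b (Tuple.sort b (f i.1))) + C) := by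
    intro f g hfg
    have h : (fun i : {i : Fin n // i ∈ L} => b (Tuple.sort b (f i.1)))
        = fun i : {i : Fin n // i ∈ L} => b (Tuple.sort b (g i.1)) := by
      funext i
      rw [hfg i.1 i.2]
    dsimp only
    rw [h]
  -- core inequality
  have hcore := core n I L hIL
    (fun i => (univ.filter fun j => c (Tuple.sort c j) ≤ x i).card)
    (fun i => (univ.filter fun j => b (Tuple.sort b j) ≤ x i).card)
    hk
    (fun f : Fin n → Fin n =>
      φ (fun i : {i : Fin n // i ∈ L} => b (Tuple.sort b (f i.1))) + C)
    hψbmono hψbpos hψbdep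
  -- pointwise comparison
  have hptsum : SS (Ev n I (fun i => (univ.filter fun j => c (Tuple.sort c j) ≤ x i).card))
        (fun f => φ (fun i : {i : Fin n // i ∈ L} => c (Tuple.sort c (f i.1))) + C)
      ≤ SS (Ev n I (fun i => (univ.filter fun j => c (Tuple.sort c j) ≤ x i).card))
        (fun f => φ (fun i : {i : Fin n // i ∈ L} => b (Tuple.sort b (f i.1))) + C) :=
    Finset.sum_le_sum fun σ _ => add_le_add_left (hφ (fun i => hdom (σ i.1))) C
  -- express the goal sums via the shifted functions
  have hsumc : (∑ σ ∈ Ev n I (fun i => (univ.filter fun j => c (Tuple.sort c j) ≤ x i).card),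
        φ (fun i : {i : Fin n // i ∈ L} => permVec (fun i => c (Tuple.sort c i)) σ i.1))
      = SS (Ev n I (fun i => (univ.filter fun j => c (Tuple.sort c j) ≤ x i).card))
          (fun f => φ (fun i : {i : Fin n // i ∈ L} => c (Tuple.sort c (f i.1))) + C)
        - ((Ev n I (fun i => (univ.filter fun j => c (Tuple.sort c j) ≤ x i).card)).card : ℝ) * C := by
    rw [SS, Finset.sum_add_distrib, Finset.sum_const, nsmul_eq_mul]
    ring_nf
    rfl
  have hsumb : (∑ σ ∈ Ev n I (fun i => (univ.filter fun j => b (Tuple.sort b j) ≤ x i).card),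
        φ (fun i : {i : Fin n // i ∈ L} => permVec (fun i => b (Tuple.sort b i)) σ i.1))
      = SS (Ev n I (fun i => (univ.filter fun j => b (Tuple.sort b j) ≤ x i).card))
          (fun f => φ (fun i : {i : Fin n // i ∈ L} => b (Tuple.sort b (f i.1))) + C)
        - ((Ev n I (fun i => (univ.filter fun j => b (Tuple.sort b j) ≤ x i).card)).card : ℝ) * C := by
    rw [SS, Finset.sum_add_distrib, Finset.sum_const, nsmul_eq_mul]
    ring_nf
    rfl
  rw [hsumc, hsumb]
  nlinarith [hcore, hptsum, hNc, hNb]
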